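/- Let R be a commutative ring with an ultrametric submultiplicative norm ‖·‖ bounded by 1, and let ρ ∈ (0,1]. Then for all Hahn series f, g ∈ HahnSeries ℝ≥0 R, the Gauss norm of radius ρ is submultiplicative: |f·g|_ρ ≤ |f|_ρ · |g|_ρ. -/
import Mathlib


open scoped NNReal

/-- The Gauss norm of radius `ρ` of a Hahn (Mal'cev–Neumann) series
`f = Σ aᵢ tⁱ ∈ HahnSeries ℝ≥0 R`, with respect to a norm `n` on `R`:
`|f|_ρ = sup_{i ∈ supp f} n(aᵢ)·ρ^i` (with `|0|_ρ = 0`, since `sSup ∅ = 0` in `ℝ`). -/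
noncomputable def gaussNorm {R : Type} [CommRing R] (n : R → ℝ) (ρ : ℝ)
    (f : HahnSeries ℝ≥0 R) : ℝ :=
  sSup ((fun i : ℝ≥0 => n (f.coeff i) * ρ ^ (i : ℝ)) '' f.support)

private lemma gauss_norm_sum_le_aux {R : Type} [CommRing R] (n : R → ℝ)
    (hzero : n 0 = 0)
    (hadd : ∀ a b : R, n (a + b) ≤ max (n a) (n b))
    {ι : Type*} [DecidableEq ι] (s : Finset ι) (F : ι → R) (C r : ℝ) (hr : 0 ≤ r) (hC : 0 ≤ C)
    (h : ∀ x ∈ s, n (F x) * r ≤ C) : n (∑ x ∈ s, F x) * r ≤ C := by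
  induction s using Finset.induction with
  | empty => simpa [hzero] using hC
  | @insert a s hx ih =>
    rw [Finset.sum_insert hx]
    calc n (F a + ∑ x ∈ s, F x) * r ≤ max (n (F a)) (n (∑ x ∈ s, F x)) * r := by
          exact mul_le_mul_of_nonneg_right (hadd _ _) hr
      _ = max (n (F a) * r) (n (∑ x ∈ s, F x) * r) := max_mul_of_nonneg _ _ hr
      _ ≤ C := max_le (h a (Finset.mem_insert_self a s))
          (ih fun x hx => h x (Finset.mem_insert_of_mem hx))

/-- the Gauss norm of radius `ρ ∈ (0,1]` on the Mal'cev–Neumann series ring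
`HahnSeries ℝ≥0 R`, over a commutative ring `R` with an ultrametric submultiplicative norm
bounded by `1`, is submultiplicative. -/
theorem gaussNorm_mul_le
    (R : Type) [CommRing R] (n : R → ℝ)
    (hnonneg : ∀ a : R, 0 ≤ n a)
    (hzero : ∀ a : R, n a = 0 ↔ a = 0)
    (hmul : ∀ a b : R, n (a * b) ≤ n a * n b)
    (hadd : ∀ a b : R, n (a + b) ≤ max (n a) (n b))
    (hbd : ∀ a : R, n a ≤ 1)
    (ρ : ℝ) (hρ : ρ ∈ Set.Ioc (0 : ℝ) 1)
    (f g : HahnSeries ℝ≥0 R) :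
    gaussNorm n ρ (f * g) ≤ gaussNorm n ρ f * gaussNorm n ρ g := by
  obtain ⟨hρ0, hρ1⟩ := hρ
  have hn0 : n 0 = 0 := (hzero 0).mpr rfl
  have hrpow : ∀ i : ℝ≥0, (0:ℝ) ≤ ρ ^ (i : ℝ) :=
    fun i => Real.rpow_nonneg hρ0.le _
  have hrpow1 : ∀ i : ℝ≥0, ρ ^ (i : ℝ) ≤ 1 :=
    fun i => Real.rpow_le_one hρ0.le hρ1 i.coe_nonneg
  -- nonnegativity and boundedness of gaussNorm
  have hgn_nonneg : ∀ h : HahnSeries ℝ≥0 R, 0 ≤ gaussNorm n ρ h := by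
    intro h
    apply Real.sSup_nonneg
    rintro x ⟨i, _, rfl⟩
    exact mul_nonneg (hnonneg _) (hrpow i)
  have hbdd : ∀ h : HahnSeries ℝ≥0 R,
      BddAbove ((fun i : ℝ≥0 => n (h.coeff i) * ρ ^ (i : ℝ)) '' h.support) := by
    intro h
    refine ⟨1, ?_⟩
    rintro x ⟨i, _, rfl⟩
    exact mul_le_one₀ (hbd _) (hrpow i) (hrpow1 i)
  have hle : ∀ (h : HahnSeries ℝ≥0 R) (i : ℝ≥0),
      n (h.coeff i) * ρ ^ (i : ℝ) ≤ gaussNorm n ρ h := by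
    intro h i
    by_cases hi : i ∈ h.support
    · exact le_csSup (hbdd h) ⟨i, hi, rfl⟩
    · have : h.coeff i = 0 := by simpa [HahnSeries.mem_support, not_not] using hi
      rw [this, hn0, zero_mul]
      exact hgn_nonneg h
  apply Real.sSup_le
  · rintro x ⟨i, _, rfl⟩
    show n ((f * g).coeff i) * ρ ^ (i : ℝ) ≤ _
    rw [HahnSeries.coeff_mul]
    apply gauss_norm_sum_le_aux n hn0 hadd _ _ _ _ (hrpow i)
      (mul_nonneg (hgn_nonneg f) (hgn_nonneg g))
    rintro ⟨a, b⟩ hab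
    rw [Finset.mem_addAntidiagonal] at hab
    obtain ⟨ha, hb, hab⟩ := hab
    have hsplit : ρ ^ (i : ℝ) = ρ ^ (a : ℝ) * ρ ^ (b : ℝ) := by
      rw [← Real.rpow_add hρ0, ← hab]; push_cast; ring
    calc n (f.coeff a * g.coeff b) * ρ ^ (i : ℝ)
        ≤ (n (f.coeff a) * n (g.coeff b)) * ρ ^ (i : ℝ) :=
          mul_le_mul_of_nonneg_right (hmul _ _) (hrpow i)
      _ = (n (f.coeff a) * ρ ^ (a : ℝ)) * (n (g.coeff b) * ρ ^ (b : ℝ)) := by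
          rw [hsplit]; ring
      _ ≤ gaussNorm n ρ f * gaussNorm n ρ g :=
          mul_le_mul (hle f a) (hle g b)
            (mul_nonneg (hnonneg _) (hrpow b)) (hgn_nonneg f)
  · exact mul_nonneg (hgn_nonneg f) (hgn_nonneg g)
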